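/- A Heinlein wall of size r has treewidth at most 5. -/

import Mathlib

/-- Vertices of a Heinlein wall of size `r`: path vertices `u j i` (path `j`,
position `i`, both 0-based), bottleneck vertices `z t` (`t = 0, …, r`), and the
terminals `a`, `b`.  We write `c = z 0` and `d = z r`. -/
inductive HWVert (r : ℕ) where
  | u : Fin r → Fin (2 * r) → HWVert r
  | z : Fin (r + 1) → HWVert r
  | a : HWVert r
  | b : HWVert r
deriving DecidableEq

/-- The defining relation of the Heinlein wall (paper 1-based indices translated
to 0-based ones): `u j i — u j (i+1)`; `z t — u j i` for `i` even iff `t = j`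
and for `i` odd iff `t = j + 1`; `z t — z (t+1)`; `a — u j 0`; `b — u j (2r-1)`. -/
def HWRel (r : ℕ) : HWVert r → HWVert r → Prop := fun x y =>
  match x, y with
  | .u j i, .u j' i' => j = j' ∧ i'.val = i.val + 1
  | .z t, .u j i => (i.val % 2 = 0 ∧ t.val = j.val) ∨ (i.val % 2 = 1 ∧ t.val = j.val + 1)
  | .z t, .z t' => t'.val = t.val + 1
  | .a, .u _ i => i.val = 0
  | .b, .u _ i => i.val = 2 * r - 1
  | _, _ => False

/-- The Heinlein wall of size `r`. -/
def HW (r : ℕ) : SimpleGraph (HWVert r) := SimpleGraph.fromRel (HWRel r)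


open SimpleGraph

/-- The path graph on `ℕ`. -/
def NPath : SimpleGraph ℕ := SimpleGraph.fromRel (fun m n => n = m + 1)

lemma nPath_adj {a c : ℕ} (h : NPath.Adj a c) : c = a + 1 ∨ a = c + 1 := by
  rw [NPath, SimpleGraph.fromRel_adj] at h
  exact h.2

lemma nPath_adj_succ (n : ℕ) : NPath.Adj n (n + 1) := by
  rw [NPath, SimpleGraph.fromRel_adj]
  exact ⟨by omega, Or.inl rfl⟩

lemma nPath_ivt {a b : ℕ} (p : NPath.Walk a b) :
    ∀ k, min a b ≤ k → k ≤ max a b → k ∈ p.support := by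
  induction p with
  | nil => intro k h1 h2; simp; omega
  | @cons u v w h p ih =>
    intro k h1 h2
    rw [SimpleGraph.Walk.support_cons]
    rcases eq_or_ne k u with rfl | hk
    · exact List.mem_cons_self
    · have hd := nPath_adj h
      exact List.mem_cons_of_mem _ (ih k (by omega) (by omega))

lemma nPath_path_support_bound {a b : ℕ} (p : NPath.Walk a b) (hp : p.IsPath) :
    ∀ k ∈ p.support, min a b ≤ k ∧ k ≤ max a b := by
  induction p with
  | nil => intro k hk; simp at hk; omega
  | @cons u v w h p ih =>
    intro k hk
    rw [SimpleGraph.Walk.support_cons, List.mem_cons] at hk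
    rw [SimpleGraph.Walk.cons_isPath_iff] at hp
    obtain ⟨hp', hu⟩ := hp
    rcases hk with rfl | hk
    · omega
    · obtain ⟨h1, h2⟩ := ih hp' k hk
      by_contra hcon
      have hd := nPath_adj h
      exact hu (nPath_ivt p u (by omega) (by omega))

lemma nPath_first_step {u v w : ℕ} (h : NPath.Adj u v) (p : NPath.Walk v w)
    (hu : u ∉ p.support) (huw : u ≠ w) : v = if u < w then u + 1 else u - 1 := by
  have hd := nPath_adj h
  rcases hd with hv | hv
  · -- v = u + 1
    rcases lt_or_ge u w with hlt | hle
    · simp [hlt, hv]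
    · exact absurd (nPath_ivt p u (by omega) (by omega)) hu
  · -- u = v + 1
    rcases lt_or_ge u w with hlt | hle
    · exact absurd (nPath_ivt p u (by omega) (by omega)) hu
    · have hnlt : ¬ u < w := by omega
      simp only [hnlt, if_false]
      omega

lemma nPath_path_unique {a b : ℕ} (p : NPath.Walk a b) (hp : p.IsPath) :
    ∀ q : NPath.Walk a b, q.IsPath → q = p := by
  induction p with
  | nil =>
    intro q hq
    exact (SimpleGraph.Walk.isPath_iff_eq_nil (p := q)).1 hq
  | @cons u v w h p ih =>
    intro q hq
    rw [SimpleGraph.Walk.cons_isPath_iff] at hp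
    obtain ⟨hp', hu⟩ := hp
    have huw : u ≠ w := by
      intro he
      subst he
      exact hu p.end_mem_support
    cases q with
    | nil => exact absurd rfl huw
    | @cons _ v2 _ h2 q2 =>
      rw [SimpleGraph.Walk.cons_isPath_iff] at hq
      obtain ⟨hq2, hu2⟩ := hq
      have e1 := nPath_first_step h p hu huw
      have e2 := nPath_first_step h2 q2 hu2 huw
      have : v2 = v := by rw [e1, e2]
      subst this
      rw [ih hp' q2 hq2]

lemma nPath_connected : NPath.Connected := by
  have : ∀ n : ℕ, NPath.Reachable 0 n := by
    intro n
    induction n with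
    | zero => exact SimpleGraph.Reachable.refl 0
    | succ n ih => exact ih.trans (nPath_adj_succ n).reachable
  exact SimpleGraph.Connected.mk fun a b => ((this a).symm).trans (this b)

lemma nPath_isTree : NPath.IsTree := by
  constructor
  · exact nPath_connected
  · rw [SimpleGraph.isAcyclic_iff_path_unique]
    intro v w p q
    exact Subtype.ext (nPath_path_unique q.1 q.2 p.1 p.2)

/-! Arithmetic for the bags -/

def HWq (r : ℕ) : ℕ := 2 * r - 1
def HWclamp (r n : ℕ) : ℕ := min n (r * HWq r - 1)
def bagJ (r n : ℕ) : ℕ := HWclamp r n / HWq r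
def bagI (r n : ℕ) : ℕ := HWclamp r n % HWq r

lemma HWq_pos {r : ℕ} (hr : 1 ≤ r) : 0 < HWq r := by unfold HWq; omega

lemma HWrq (r : ℕ) (hr : 1 ≤ r) : HWq r ≤ r * HWq r :=
  Nat.le_mul_of_pos_left _ hr

lemma HWclamp_lt {r : ℕ} (hr : 1 ≤ r) (n : ℕ) : HWclamp r n < r * HWq r := by
  have h1 := HWrq r hr
  have h2 := HWq_pos hr
  unfold HWclamp
  omega

lemma bagJ_lt {r : ℕ} (hr : 1 ≤ r) (n : ℕ) : bagJ r n < r := by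
  rw [bagJ, Nat.div_lt_iff_lt_mul (HWq_pos hr)]
  exact HWclamp_lt hr n

lemma bagI_lt {r : ℕ} (hr : 1 ≤ r) (n : ℕ) : bagI r n < HWq r :=
  Nat.mod_lt _ (HWq_pos hr)

lemma bag_decomp (r n : ℕ) : bagJ r n * HWq r + bagI r n = HWclamp r n := by
  rw [bagJ, bagI]
  exact Nat.div_add_mod' _ _

lemma HWclamp_mono {r : ℕ} {n m : ℕ} (h : n ≤ m) : HWclamp r n ≤ HWclamp r m :=
  min_le_min h le_rfl

lemma bagJ_mono {r : ℕ} {n m : ℕ} (h : n ≤ m) : bagJ r n ≤ bagJ r m :=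
  Nat.div_le_div_right (HWclamp_mono h)

lemma HWclamp_grid {r : ℕ} (hr : 1 ≤ r) {j i : ℕ} (hj : j < r) (hi : i < HWq r) :
    HWclamp r (j * HWq r + i) = j * HWq r + i := by
  have h1 : j * HWq r ≤ (r - 1) * HWq r := Nat.mul_le_mul_right _ (by omega)
  rw [Nat.sub_mul, one_mul] at h1
  have h2 := HWrq r hr
  unfold HWclamp
  omega

lemma bag_of_clamp {r : ℕ} (hr : 1 ≤ r) {n j i : ℕ} (hi : i < HWq r)
    (h : HWclamp r n = j * HWq r + i) : bagJ r n = j ∧ bagI r n = i := by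
  rw [bagJ, bagI, h, Nat.add_comm]
  constructor
  · rw [Nat.add_mul_div_right _ _ (HWq_pos hr), Nat.div_eq_of_lt hi, Nat.zero_add]
  · rw [Nat.add_mul_mod_self_right, Nat.mod_eq_of_lt hi]

lemma bag_grid {r : ℕ} (hr : 1 ≤ r) {j i : ℕ} (hj : j < r) (hi : i < HWq r) :
    bagJ r (j * HWq r + i) = j ∧ bagI r (j * HWq r + i) = i :=
  bag_of_clamp hr hi (HWclamp_grid hr hj hi)

lemma bag_eq_of_clamp_eq {r n m : ℕ} (h : HWclamp r n = HWclamp r m) :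
    bagJ r n = bagJ r m ∧ bagI r n = bagI r m := by
  rw [bagJ, bagI, h, bagJ, bagI]; exact ⟨rfl, rfl⟩

/-- The bag at index `n`. -/
def HWbag (r : ℕ) (hr : 1 ≤ r) (n : ℕ) : Finset (HWVert r) :=
  {HWVert.a, HWVert.b,
   HWVert.z ⟨bagJ r n, by have := bagJ_lt hr n; omega⟩,
   HWVert.z ⟨bagJ r n + 1, by have := bagJ_lt hr n; omega⟩,
   HWVert.u ⟨bagJ r n, bagJ_lt hr n⟩
     ⟨bagI r n, by have := bagI_lt hr n; unfold HWq at this; omega⟩,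
   HWVert.u ⟨bagJ r n, bagJ_lt hr n⟩
     ⟨bagI r n + 1, by have := bagI_lt hr n; unfold HWq at this; omega⟩}

lemma mem_bag_a {r : ℕ} (hr : 1 ≤ r) (n : ℕ) : HWVert.a ∈ HWbag r hr n := by
  simp [HWbag]

lemma mem_bag_b {r : ℕ} (hr : 1 ≤ r) (n : ℕ) : HWVert.b ∈ HWbag r hr n := by
  simp [HWbag]

lemma mem_bag_z {r : ℕ} (hr : 1 ≤ r) (n : ℕ) (t : Fin (r + 1)) :
    HWVert.z t ∈ HWbag r hr n ↔ (t.val = bagJ r n ∨ t.val = bagJ r n + 1) := by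
  simp [HWbag, Fin.ext_iff]

lemma mem_bag_u {r : ℕ} (hr : 1 ≤ r) (n : ℕ) (j : Fin r) (i : Fin (2 * r)) :
    HWVert.u j i ∈ HWbag r hr n ↔
      (j.val = bagJ r n ∧ (i.val = bagI r n ∨ i.val = bagI r n + 1)) := by
  simp [HWbag, Fin.ext_iff]
  tauto

/-- A Heinlein wall of size `r ≥ 1` has treewidth at most `5`: it admits a tree
decomposition all of whose bags have at most `5 + 1 = 6` vertices. -/
theorem heinleinWall_treewidth_le_five (r : ℕ) (hr : 1 ≤ r) :
    ∃ (ι : Type) (T : SimpleGraph ι), T.IsTree ∧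
      ∃ Bags : ι → Finset (HWVert r),
        (∀ v, ∃ i, v ∈ Bags i) ∧
        (∀ x y, (HW r).Adj x y → ∃ i, x ∈ Bags i ∧ y ∈ Bags i) ∧
        (∀ (v : HWVert r) (i j k : ι) (p : T.Walk i j), p.IsPath →
          v ∈ Bags i → v ∈ Bags j → k ∈ p.support → v ∈ Bags k) ∧
        (∀ i, (Bags i).card ≤ 5 + 1) := by
  refine ⟨ℕ, NPath, nPath_isTree, HWbag r hr, ?_, ?_, ?_, ?_⟩
  · -- every vertex is in some bag
    intro v
    cases v with
    | u j i =>
      refine ⟨j.val * HWq r + min i.val (HWq r - 1), ?_⟩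
      have hq := HWq_pos hr
      have hg := bag_grid hr j.isLt (j := j.val) (i := min i.val (HWq r - 1)) (by omega)
      rw [mem_bag_u, hg.1, hg.2]
      have hi := i.isLt
      have hq2 : HWq r = 2 * r - 1 := rfl
      exact ⟨rfl, by omega⟩
    | z t =>
      refine ⟨min t.val (r - 1) * HWq r + 0, ?_⟩
      have hq := HWq_pos hr
      have hg := bag_grid hr (j := min t.val (r - 1)) (i := 0) (by omega) (by omega)
      rw [mem_bag_z, hg.1]
      have ht := t.isLt
      omega
    | a => exact ⟨0, mem_bag_a hr 0⟩
    | b => exact ⟨0, mem_bag_b hr 0⟩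
  · -- edges covered
    have key : ∀ x y, HWRel r x y → ∃ n, x ∈ HWbag r hr n ∧ y ∈ HWbag r hr n := by
      intro x y h
      have hq := HWq_pos hr
      have hq2 : HWq r = 2 * r - 1 := rfl
      cases x with
      | u j i =>
        cases y with
        | u j' i' =>
          obtain ⟨rfl, hii⟩ := h
          have hi' := i'.isLt
          have hilt : i.val < HWq r := by omega
          refine ⟨j.val * HWq r + i.val, ?_, ?_⟩
          · have hg := bag_grid hr j.isLt hilt
            rw [mem_bag_u, hg.1, hg.2]
            exact ⟨rfl, Or.inl rfl⟩
          · have hg := bag_grid hr j.isLt hilt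
            rw [mem_bag_u, hg.1, hg.2]
            exact ⟨rfl, Or.inr (by omega)⟩
        | z t => exact absurd h (by simp [HWRel])
        | a => exact absurd h (by simp [HWRel])
        | b => exact absurd h (by simp [HWRel])
      | z t =>
        cases y with
        | u j i =>
          have hi := i.isLt
          refine ⟨j.val * HWq r + min i.val (HWq r - 1), ?_, ?_⟩
          · have hg := bag_grid hr j.isLt (j := j.val) (i := min i.val (HWq r - 1)) (by omega)
            rw [mem_bag_z, hg.1]
            rcases h with ⟨he, ht⟩ | ⟨he, ht⟩
            · exact Or.inl ht
            · exact Or.inr (by omega)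
          · have hg := bag_grid hr j.isLt (j := j.val) (i := min i.val (HWq r - 1)) (by omega)
            rw [mem_bag_u, hg.1, hg.2]
            refine ⟨rfl, ?_⟩
            rcases h with ⟨he, ht⟩ | ⟨he, ht⟩
            · have : i.val % 2 = 0 := he
              omega
            · omega
        | z t' =>
          have ht' := t'.isLt
          have h1 : t.val < r := by simp only [HWRel] at h; omega
          refine ⟨t.val * HWq r + 0, ?_, ?_⟩
          · have hg := bag_grid hr h1 (i := 0) (by omega)
            rw [mem_bag_z, hg.1]
            exact Or.inl rfl
          · have hg := bag_grid hr h1 (i := 0) (by omega)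
            rw [mem_bag_z, hg.1]
            simp only [HWRel] at h
            omega
        | a => exact absurd h (by simp [HWRel])
        | b => exact absurd h (by simp [HWRel])
      | a =>
        cases y with
        | u j i =>
          have hi0 : i.val = 0 := h
          refine ⟨j.val * HWq r + 0, mem_bag_a hr _, ?_⟩
          have hg := bag_grid hr j.isLt (i := 0) (by omega)
          rw [mem_bag_u, hg.1, hg.2]
          exact ⟨rfl, Or.inl hi0⟩
        | z t => exact absurd h (by simp [HWRel])
        | a => exact absurd h (by simp [HWRel])
        | b => exact absurd h (by simp [HWRel])
      | b =>
        cases y with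
        | u j i =>
          have hi0 : i.val = 2 * r - 1 := h
          refine ⟨j.val * HWq r + (HWq r - 1), mem_bag_b hr _, ?_⟩
          have hg := bag_grid hr j.isLt (i := HWq r - 1) (by omega)
          rw [mem_bag_u, hg.1, hg.2]
          exact ⟨rfl, Or.inr (by omega)⟩
        | z t => exact absurd h (by simp [HWRel])
        | a => exact absurd h (by simp [HWRel])
        | b => exact absurd h (by simp [HWRel])
    intro x y hadj
    rw [HW, SimpleGraph.fromRel_adj] at hadj
    rcases hadj.2 with h | h
    · exact key x y h
    · obtain ⟨n, h1, h2⟩ := key y x h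
      exact ⟨n, h2, h1⟩
  · -- coherence
    intro v n1 n2 k p hp h1 h2 hk
    obtain ⟨hk1, hk2⟩ := nPath_path_support_bound p hp k hk
    cases v with
    | a => exact mem_bag_a hr k
    | b => exact mem_bag_b hr k
    | z t =>
      rw [mem_bag_z] at h1 h2 ⊢
      rcases le_total n1 n2 with hle | hle
      · have a1 : bagJ r n1 ≤ bagJ r k := bagJ_mono (by omega)
        have a2 : bagJ r k ≤ bagJ r n2 := bagJ_mono (by omega)
        omega
      · have a1 : bagJ r n2 ≤ bagJ r k := bagJ_mono (by omega)
        have a2 : bagJ r k ≤ bagJ r n1 := bagJ_mono (by omega)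
        omega
    | u j i =>
      rw [mem_bag_u] at h1 h2 ⊢
      obtain ⟨hj1, hi1⟩ := h1
      obtain ⟨hj2, hi2⟩ := h2
      have d1 := bag_decomp r n1
      have d2 := bag_decomp r n2
      have heq : HWclamp r n1 + bagI r n2 = HWclamp r n2 + bagI r n1 := by
        rw [← d1, ← d2, ← hj1, ← hj2]
        ring
      have hclose : HWclamp r k = HWclamp r n1 ∨ HWclamp r k = HWclamp r n2 := by
        rcases le_total n1 n2 with hle | hle
        · have a1 : HWclamp r n1 ≤ HWclamp r k := HWclamp_mono (by omega)
          have a2 : HWclamp r k ≤ HWclamp r n2 := HWclamp_mono (by omega)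
          omega
        · have a1 : HWclamp r n2 ≤ HWclamp r k := HWclamp_mono (by omega)
          have a2 : HWclamp r k ≤ HWclamp r n1 := HWclamp_mono (by omega)
          omega
      rcases hclose with hc | hc
      · obtain ⟨e1, e2⟩ := bag_eq_of_clamp_eq hc
        rw [e1, e2]
        exact ⟨hj1, hi1⟩
      · obtain ⟨e1, e2⟩ := bag_eq_of_clamp_eq hc
        rw [e1, e2]
        exact ⟨hj2, hi2⟩
  · -- cards
    intro n
    simp only [HWbag]
    refine le_trans (Finset.card_insert_le _ _) (Nat.succ_le_succ ?_)
    refine le_trans (Finset.card_insert_le _ _) (Nat.succ_le_succ ?_)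
    refine le_trans (Finset.card_insert_le _ _) (Nat.succ_le_succ ?_)
    refine le_trans (Finset.card_insert_le _ _) (Nat.succ_le_succ ?_)
    refine le_trans (Finset.card_insert_le _ _) (Nat.succ_le_succ ?_)
    simp
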